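/- (First-order low-pass filtering preserves persistence of excitation, Lemma A(f)) Let X be a finite-dimensional real inner product space, μ > 0, and g : [0,∞) → X a continuously differentiable signal that is bounded, has bounded derivative, and is PE with respect to the identity operator Id_X. Then every continuously differentiable solution z : [0,∞) → X of the ordinary differential equation dz/dt(t) = −μ z(t) + g(t) for all t ≥ 0 is also PE with respect to Id_X. -/

import Mathlib

open Set Filter

/-- FTC for functions with a derivative within `Ici 0`. -/
lemma ftc_Ici_aux {E : Type*} [NormedAddCommGroup E] [NormedSpace ℝ E] [CompleteSpace E]
    {f f' : ℝ → E} (hf : ∀ t : ℝ, 0 ≤ t → HasDerivWithinAt f (f' t) (Ici 0) t)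
    (hf' : ContinuousOn f' (Ici 0)) {a b : ℝ} (ha : 0 ≤ a) (hab : a ≤ b) :
    ∫ τ in a..b, f' τ = f b - f a := by
  have hsub : Icc a b ⊆ Ici 0 := fun x hx => le_trans ha hx.1
  apply intervalIntegral.integral_eq_sub_of_hasDeriv_right_of_le hab
  · intro x hx
    exact ((hf x (hsub hx)).continuousWithinAt).mono hsub
  · intro x hx
    exact (hf x (le_trans ha hx.1.le)).mono (fun y hy => le_trans (le_trans ha hx.1.le) hy.le)
  · exact (hf'.mono hsub).intervalIntegrable_of_Icc hab

/-- Lower bound for increments from a lower bound on the derivative. -/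
lemma incr_of_deriv_ge {f f' : ℝ → ℝ} {a b m : ℝ} (ha : 0 ≤ a) (hab : a ≤ b)
    (hf : ∀ t : ℝ, 0 ≤ t → HasDerivWithinAt f (f' t) (Ici 0) t)
    (hm : ∀ t ∈ Icc a b, m ≤ f' t) :
    m * (b - a) ≤ f b - f a := by
  have hsub : Icc a b ⊆ Ici 0 := fun x hx => le_trans ha hx.1
  have hmono : MonotoneOn (fun τ => f τ - m * τ) (Icc a b) := by
    apply monotoneOn_of_hasDerivWithinAt_nonneg (convex_Icc a b)
      (f' := fun τ => f' τ - m)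
    · exact fun x hx => (((hf x (hsub hx)).continuousWithinAt).mono hsub).sub
        (continuousWithinAt_const.mul continuousWithinAt_id)
    · intro x hx
      rw [interior_Icc] at hx ⊢
      have h1 : HasDerivWithinAt f (f' x) (Ioo a b) x :=
        (hf x (hsub (Ioo_subset_Icc_self hx))).mono (Ioo_subset_Icc_self.trans hsub)
      exact (h1.sub ((hasDerivAt_id x).const_mul m).hasDerivWithinAt).congr_deriv (by ring)
    · intro x hx
      rw [interior_Icc] at hx
      have := hm x (Ioo_subset_Icc_self hx)
      linarith
  have := hmono (left_mem_Icc.mpr hab) (right_mem_Icc.mpr hab) hab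
  simp only at this
  nlinarith [this]


/-- `g` (restricted to `[0,∞)`) is persistently exciting with respect to the identity
operator on `X`. -/
def IsPEId {X : Type*} [NormedAddCommGroup X] [InnerProductSpace ℝ X] (g : ℝ → X) : Prop :=
  ∃ T κ : ℝ, 0 < T ∧ 0 < κ ∧
    ∀ x : X, ∀ t : ℝ, 0 ≤ t →
      κ * ‖x‖ ^ 2 ≤ ∫ τ in t..(t + T), (inner ℝ (g τ) x : ℝ) ^ 2

/-- **First-order low-pass filtering preserves persistence of excitation** (Lemma A(f)).
Let `X` be a finite-dimensional real inner product space, `μ > 0`, and `g : [0,∞) → X`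
a continuously differentiable signal that is bounded, has bounded derivative, and is PE
with respect to `Id_X`. Then every continuously differentiable solution `z : [0,∞) → X`
of `dz/dt = −μ z(t) + g(t)` on `[0,∞)` is also PE with respect to `Id_X`. -/
theorem pe_preserved_by_low_pass_filter
    {X : Type*} [NormedAddCommGroup X] [InnerProductSpace ℝ X] [FiniteDimensional ℝ X]
    (μ : ℝ) (hμ : 0 < μ)
    (g gd : ℝ → X)
    (hg : ∀ t : ℝ, 0 ≤ t → HasDerivWithinAt g (gd t) (Ici 0) t)
    (hgd : ContinuousOn gd (Ici 0))
    (hgb : ∃ M : ℝ, ∀ t : ℝ, 0 ≤ t → ‖g t‖ ≤ M)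
    (hgdb : ∃ M : ℝ, ∀ t : ℝ, 0 ≤ t → ‖gd t‖ ≤ M)
    (hPE : IsPEId g)
    (z : ℝ → X)
    (hz : ∀ t : ℝ, 0 ≤ t → HasDerivWithinAt z (-μ • z t + g t) (Ici 0) t) :
    IsPEId z := by
  obtain ⟨T, κ, hT, hκ, hPEg⟩ := hPE
  obtain ⟨M0, hM0⟩ := hgb
  obtain ⟨Md0, hMd0⟩ := hgdb
  obtain ⟨M, hM1, hM⟩ : ∃ M : ℝ, 1 ≤ M ∧ ∀ t : ℝ, 0 ≤ t → ‖g t‖ ≤ M :=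
    ⟨max M0 1, le_max_right _ _, fun t ht => (hM0 t ht).trans (le_max_left _ _)⟩
  have hMpos : (0:ℝ) < M := by linarith
  obtain ⟨Md, hMd1, hMd⟩ : ∃ Md : ℝ, 1 ≤ Md ∧ ∀ t : ℝ, 0 ≤ t → ‖gd t‖ ≤ Md :=
    ⟨max Md0 1, le_max_right _ _, fun t ht => (hMd0 t ht).trans (le_max_left _ _)⟩
  have hMdpos : (0:ℝ) < Md := by linarith
  have hzc : ContinuousOn z (Ici 0) := fun t ht => (hz t ht).continuousWithinAt
  have hgc : ContinuousOn g (Ici 0) := fun t ht => (hg t ht).continuousWithinAt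
  obtain ⟨Z, hZdef⟩ : ∃ Z : ℝ, Z = ‖z 0‖ + M / μ := ⟨_, rfl⟩
  have hZpos : 0 < Z := by
    have h1 : 0 < M / μ := div_pos hMpos hμ
    have h2 := norm_nonneg (z 0)
    rw [hZdef]; linarith
  -- boundedness of z
  have hzb : ∀ t : ℝ, 0 ≤ t → ‖z t‖ ≤ Z := by
    intro t ht
    have hw' : ∀ τ : ℝ, 0 ≤ τ → HasDerivWithinAt (fun σ => Real.exp (μ * σ) • z σ)
        (Real.exp (μ * τ) • g τ) (Ici 0) τ := by
      intro τ hτ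
      have he : HasDerivWithinAt (fun s => Real.exp (μ * s)) (μ * Real.exp (μ * τ)) (Ici 0) τ := by
        have h1 := ((Real.hasDerivAt_exp (μ * τ)).comp τ ((hasDerivAt_id τ).const_mul μ))
        have h2 : Real.exp (μ * τ) * (μ * 1) = μ * Real.exp (μ * τ) := by ring
        rw [h2] at h1
        exact h1.hasDerivWithinAt
      have hcomb := he.smul (hz τ hτ)
      convert hcomb using 1
      · rfl
      module
    have hwc : ContinuousOn (fun τ => Real.exp (μ * τ) • g τ) (Ici 0) :=
      ((Real.continuous_exp.comp (continuous_const.mul continuous_id)).continuousOn).smul hgc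
    have hftc := ftc_Ici_aux hw' hwc le_rfl ht
    have hexpd : ∀ τ : ℝ, 0 ≤ τ →
        HasDerivWithinAt (fun s => Real.exp (μ * s) / μ) (Real.exp (μ * τ)) (Ici 0) τ := by
      intro τ _
      have h1 := (((Real.hasDerivAt_exp (μ * τ)).comp τ
        ((hasDerivAt_id τ).const_mul μ)).div_const μ)
      have h2 : Real.exp (μ * τ) * (μ * 1) / μ = Real.exp (μ * τ) := by field_simp
      rw [h2] at h1
      exact h1.hasDerivWithinAt
    have hIexp : ∫ τ in (0:ℝ)..t, Real.exp (μ * τ) = (Real.exp (μ * t) - 1) / μ := by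
      rw [ftc_Ici_aux hexpd
        ((Real.continuous_exp.comp (continuous_const.mul continuous_id)).continuousOn) le_rfl ht]
      rw [mul_zero, Real.exp_zero]
      ring
    have hIb : ‖∫ τ in (0:ℝ)..t, Real.exp (μ * τ) • g τ‖ ≤ M * ((Real.exp (μ * t) - 1) / μ) := by
      have h1 : ‖∫ τ in (0:ℝ)..t, Real.exp (μ * τ) • g τ‖
          ≤ ∫ τ in (0:ℝ)..t, ‖Real.exp (μ * τ) • g τ‖ :=
        intervalIntegral.norm_integral_le_integral_norm ht
      have h2 : ∫ τ in (0:ℝ)..t, ‖Real.exp (μ * τ) • g τ‖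
          ≤ ∫ τ in (0:ℝ)..t, Real.exp (μ * τ) * M := by
        apply intervalIntegral.integral_mono_on ht
        · exact ((hwc.mono (by rw [uIcc_of_le ht]; exact fun τ hτ => hτ.1)).norm).intervalIntegrable
        · exact ((Real.continuous_exp.comp (continuous_const.mul continuous_id)).mul
            continuous_const).intervalIntegrable _ _
        · intro τ hτ
          rw [norm_smul, Real.norm_eq_abs, abs_of_pos (Real.exp_pos _)]
          exact mul_le_mul_of_nonneg_left (hM τ hτ.1) (Real.exp_pos _).le
      have h3 : ∫ τ in (0:ℝ)..t, Real.exp (μ * τ) * M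
          = M * ((Real.exp (μ * t) - 1) / μ) := by
        rw [intervalIntegral.integral_mul_const, hIexp]
        ring
      linarith
    have hw0 : Real.exp (μ * 0) • z 0 = z 0 := by simp
    have hwt : ‖Real.exp (μ * t) • z t‖ = Real.exp (μ * t) * ‖z t‖ := by
      rw [norm_smul, Real.norm_eq_abs, abs_of_pos (Real.exp_pos _)]
    have hkey : Real.exp (μ * t) * ‖z t‖ ≤ ‖z 0‖ + M * ((Real.exp (μ * t) - 1) / μ) := by
      have heq : Real.exp (μ * t) • z t
          = Real.exp (μ * 0) • z 0 + ∫ τ in (0:ℝ)..t, Real.exp (μ * τ) • g τ := by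
        rw [hftc]; abel
      calc Real.exp (μ * t) * ‖z t‖ = ‖Real.exp (μ * t) • z t‖ := hwt.symm
        _ ≤ ‖Real.exp (μ * 0) • z 0‖ + ‖∫ τ in (0:ℝ)..t, Real.exp (μ * τ) • g τ‖ := by
            rw [heq]; exact norm_add_le _ _
        _ ≤ ‖z 0‖ + M * ((Real.exp (μ * t) - 1) / μ) := by rw [hw0]; linarith
    have hkey' : Real.exp (μ * t) * ‖z t‖
        ≤ ‖z 0‖ + (M / μ) * Real.exp (μ * t) - M / μ := by
      have heq2 : M * ((Real.exp (μ * t) - 1) / μ) = (M / μ) * Real.exp (μ * t) - M / μ := by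
        field_simp
      linarith [hkey, heq2.le, heq2.ge]
    have he1 : (1:ℝ) ≤ Real.exp (μ * t) := Real.one_le_exp (by positivity)
    have hD : 0 ≤ M / μ := (div_pos hMpos hμ).le
    rw [hZdef]
    nlinarith [norm_nonneg (z 0), norm_nonneg (z t), hkey', he1, hD,
      mul_nonneg (sub_nonneg.2 he1) (norm_nonneg (z 0)),
      mul_nonneg (sub_nonneg.2 he1) hD]
  -- constants
  obtain ⟨c, hcdef⟩ : ∃ c : ℝ, c = Real.sqrt (κ / (2 * T)) := ⟨_, rfl⟩
  have hcsq : c ^ 2 = κ / (2 * T) := by rw [hcdef]; exact Real.sq_sqrt (by positivity)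
  have hc : 0 < c := by rw [hcdef]; exact Real.sqrt_pos.2 (by positivity)
  obtain ⟨δ, hδdef⟩ : ∃ δ : ℝ, δ = c / (2 * Md) := ⟨_, rfl⟩
  have hδ : 0 < δ := by rw [hδdef]; positivity
  obtain ⟨L, hLdef⟩ : ∃ L : ℝ, L = μ * Z + M := ⟨_, rfl⟩
  have hL : 0 < L := by rw [hLdef]; positivity
  obtain ⟨ε, hεdef⟩ : ∃ ε : ℝ, ε = min (c * δ / 8) (c / (8 * μ)) := ⟨_, rfl⟩
  have hε : 0 < ε := by rw [hεdef]; exact lt_min (by positivity) (by positivity)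
  obtain ⟨ρ, hρdef⟩ : ∃ ρ : ℝ, ρ = ε / (2 * L) := ⟨_, rfl⟩
  have hρ : 0 < ρ := by rw [hρdef]; positivity
  obtain ⟨T', hT'def⟩ : ∃ T' : ℝ, T' = T + δ + ρ := ⟨_, rfl⟩
  have hT' : 0 < T' := by rw [hT'def]; linarith
  obtain ⟨κ', hκ'def⟩ : ∃ κ' : ℝ, κ' = (ε / 2) ^ 2 * ρ := ⟨_, rfl⟩
  have hκ' : 0 < κ' := by rw [hκ'def]; positivity
  -- derivative of inner products
  have hφd : ∀ (x : X) (τ : ℝ), 0 ≤ τ → HasDerivWithinAt (fun σ => (inner ℝ (z σ) x : ℝ))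
      (-μ * (inner ℝ (z τ) x : ℝ) + (inner ℝ (g τ) x : ℝ)) (Ici 0) τ := by
    intro x τ hτ
    have := (hz τ hτ).inner ℝ (hasDerivWithinAt_const τ (Ici (0:ℝ)) x)
    simpa [inner_add_left, real_inner_smul_left] using this
  have hψd : ∀ (x : X) (τ : ℝ), 0 ≤ τ → HasDerivWithinAt (fun σ => (inner ℝ (g σ) x : ℝ))
      ((inner ℝ (gd τ) x : ℝ)) (Ici 0) τ := by
    intro x τ hτ
    have := (hg τ hτ).inner ℝ (hasDerivWithinAt_const τ (Ici (0:ℝ)) x)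
    simpa using this
  -- Lipschitz bounds
  have hψlip : ∀ x : X, ‖x‖ = 1 → ∀ a : ℝ, 0 ≤ a → ∀ b : ℝ, 0 ≤ b →
      |(inner ℝ (g b) x : ℝ) - (inner ℝ (g a) x : ℝ)| ≤ Md * |b - a| := by
    intro x hx a ha b hb
    have := Convex.norm_image_sub_le_of_norm_hasDerivWithin_le (C := Md)
      (f := fun σ => (inner ℝ (g σ) x : ℝ)) (f' := fun τ => (inner ℝ (gd τ) x : ℝ))
      (fun τ hτ => hψd x τ hτ) ?_ (convex_Ici 0) ha hb
    · simpa [Real.norm_eq_abs] using this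
    · intro τ hτ
      rw [Real.norm_eq_abs]
      calc |(inner ℝ (gd τ) x : ℝ)| ≤ ‖gd τ‖ * ‖x‖ := abs_real_inner_le_norm _ _
        _ = ‖gd τ‖ := by rw [hx, mul_one]
        _ ≤ Md := hMd τ hτ
  have hφlip : ∀ x : X, ‖x‖ = 1 → ∀ a : ℝ, 0 ≤ a → ∀ b : ℝ, 0 ≤ b →
      |(inner ℝ (z b) x : ℝ) - (inner ℝ (z a) x : ℝ)| ≤ L * |b - a| := by
    intro x hx a ha b hb
    have := Convex.norm_image_sub_le_of_norm_hasDerivWithin_le (C := L)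
      (f := fun σ => (inner ℝ (z σ) x : ℝ))
      (f' := fun τ => -μ * (inner ℝ (z τ) x : ℝ) + (inner ℝ (g τ) x : ℝ))
      (fun τ hτ => hφd x τ hτ) ?_ (convex_Ici 0) ha hb
    · simpa [Real.norm_eq_abs] using this
    · intro τ hτ
      rw [Real.norm_eq_abs]
      have h1 : |(inner ℝ (z τ) x : ℝ)| ≤ Z := by
        calc |(inner ℝ (z τ) x : ℝ)| ≤ ‖z τ‖ * ‖x‖ := abs_real_inner_le_norm _ _
          _ = ‖z τ‖ := by rw [hx, mul_one]
          _ ≤ Z := hzb τ hτ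
      have h2 : |(inner ℝ (g τ) x : ℝ)| ≤ M := by
        calc |(inner ℝ (g τ) x : ℝ)| ≤ ‖g τ‖ * ‖x‖ := abs_real_inner_le_norm _ _
          _ = ‖g τ‖ := by rw [hx, mul_one]
          _ ≤ M := hM τ hτ
      calc |(-μ * (inner ℝ (z τ) x : ℝ) + (inner ℝ (g τ) x : ℝ))|
          ≤ |(-μ * (inner ℝ (z τ) x : ℝ))| + |(inner ℝ (g τ) x : ℝ)| := abs_add_le _ _
        _ = μ * |(inner ℝ (z τ) x : ℝ)| + |(inner ℝ (g τ) x : ℝ)| := by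
            rw [abs_mul, abs_neg, abs_of_pos hμ]
        _ ≤ μ * Z + M := by
            have := mul_le_mul_of_nonneg_left h1 hμ.le
            linarith
        _ = L := hLdef.symm
  -- key pointwise escape claim
  have key : ∀ x : X, ‖x‖ = 1 → ∀ a : ℝ, 0 ≤ a → c ≤ (inner ℝ (g a) x : ℝ) →
      ∃ s ∈ Icc a (a + δ), ε ≤ |(inner ℝ (z s) x : ℝ)| := by
    intro x hx a ha hca
    by_contra hcon
    push_neg at hcon
    have hψge : ∀ τ ∈ Icc a (a + δ), c / 2 ≤ (inner ℝ (g τ) x : ℝ) := by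
      intro τ hτ
      have hτ0 : 0 ≤ τ := le_trans ha hτ.1
      have hlip := hψlip x hx a ha τ hτ0
      have habs : |τ - a| ≤ δ := by
        rw [abs_of_nonneg (by linarith [hτ.1])]
        linarith [hτ.2]
      have hMdδ : Md * δ = c / 2 := by
        rw [hδdef]; field_simp
      have h1 : |(inner ℝ (g τ) x : ℝ) - (inner ℝ (g a) x : ℝ)| ≤ c / 2 := by
        calc |(inner ℝ (g τ) x : ℝ) - (inner ℝ (g a) x : ℝ)| ≤ Md * |τ - a| := hlip
          _ ≤ Md * δ := mul_le_mul_of_nonneg_left habs hMdpos.le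
          _ = c / 2 := hMdδ
      have := (abs_le.mp h1).1
      linarith
    have hder : ∀ τ ∈ Icc a (a + δ),
        c / 4 ≤ -μ * (inner ℝ (z τ) x : ℝ) + (inner ℝ (g τ) x : ℝ) := by
      intro τ hτ
      have h1 := hcon τ hτ
      have h2 := hψge τ hτ
      have hεle : ε ≤ c / (8 * μ) := by rw [hεdef]; exact min_le_right _ _
      have hμε : μ * ε ≤ c / 8 := by
        calc μ * ε ≤ μ * (c / (8 * μ)) := mul_le_mul_of_nonneg_left hεle hμ.le
          _ = c / 8 := by field_simp
      have h3 := (abs_lt.mp h1).2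
      have h4 : μ * (inner ℝ (z τ) x : ℝ) ≤ μ * ε := mul_le_mul_of_nonneg_left h3.le hμ.le
      linarith
    have hincr := incr_of_deriv_ge ha (by linarith : a ≤ a + δ) (hφd x) hder
    have hincr' : c / 4 * δ ≤ (inner ℝ (z (a + δ)) x : ℝ) - (inner ℝ (z a) x : ℝ) := by
      simpa using hincr
    have hia := abs_lt.mp (hcon a ⟨le_refl a, by linarith⟩)
    have hib := abs_lt.mp (hcon (a + δ) ⟨by linarith, le_refl _⟩)
    have h2ε : 2 * ε ≤ c * δ / 4 := by
      have : ε ≤ c * δ / 8 := by rw [hεdef]; exact min_le_left _ _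
      linarith
    linarith [hia.1, hia.2, hib.1, hib.2, hincr', h2ε]
  -- integrability of squared inner products of z
  have hzint : ∀ (x : X) (u v : ℝ), 0 ≤ u → u ≤ v →
      IntervalIntegrable (fun τ => (inner ℝ (z τ) x : ℝ) ^ 2) MeasureTheory.volume u v := by
    intro x u v hu huv
    apply ContinuousOn.intervalIntegrable
    apply ContinuousOn.pow
    apply ContinuousOn.inner (hzc.mono ?_) continuousOn_const
    rw [uIcc_of_le huv]
    exact fun τ hτ => le_trans hu hτ.1
  -- the main estimate for unit vectors
  have main : ∀ x : X, ‖x‖ = 1 → ∀ t : ℝ, 0 ≤ t →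
      κ' ≤ ∫ τ in t..(t + T'), (inner ℝ (z τ) x : ℝ) ^ 2 := by
    intro x hx t ht
    have hψ2int : IntervalIntegrable (fun τ => (inner ℝ (g τ) x : ℝ) ^ 2)
        MeasureTheory.volume t (t + T) := by
      apply ContinuousOn.intervalIntegrable
      apply ContinuousOn.pow
      apply ContinuousOn.inner (hgc.mono ?_) continuousOn_const
      rw [uIcc_of_le (by linarith)]
      exact fun τ hτ => le_trans ht hτ.1
    have step1 : ∃ a ∈ Icc t (t + T), c ≤ |(inner ℝ (g a) x : ℝ)| := by
      by_contra h
      push_neg at h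
      have hmono : ∫ τ in t..(t + T), (inner ℝ (g τ) x : ℝ) ^ 2
          ≤ ∫ τ in t..(t + T), κ / (2 * T) := by
        apply intervalIntegral.integral_mono_on (by linarith) hψ2int
          intervalIntegrable_const
        intro τ hτ
        have h1 : |(inner ℝ (g τ) x : ℝ)| ≤ c := (h τ hτ).le
        calc (inner ℝ (g τ) x : ℝ) ^ 2 = |(inner ℝ (g τ) x : ℝ)| ^ 2 := (sq_abs _).symm
          _ ≤ c ^ 2 := pow_le_pow_left₀ (abs_nonneg _) h1 2
          _ = κ / (2 * T) := hcsq
      rw [intervalIntegral.integral_const] at hmono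
      have hge := hPEg x t ht
      rw [hx] at hge
      simp only [one_pow, mul_one] at hge
      have hval : (t + T - t) • (κ / (2 * T)) = κ / 2 := by
        have h0 : t + T - t = T := by ring
        rw [smul_eq_mul, h0]
        field_simp
      rw [hval] at hmono
      linarith
    obtain ⟨a, haI, hac⟩ := step1
    have ha0 : 0 ≤ a := le_trans ht haI.1
    have step2 : ∃ s ∈ Icc a (a + δ), ε ≤ |(inner ℝ (z s) x : ℝ)| := by
      rcases le_or_gt 0 (inner ℝ (g a) x : ℝ) with hpos | hneg
      · exact key x hx a ha0 (by rwa [abs_of_nonneg hpos] at hac)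
      · have hx' : ‖(-x)‖ = 1 := by rw [norm_neg, hx]
        have hc' : c ≤ (inner ℝ (g a) (-x) : ℝ) := by
          rw [inner_neg_right]
          rw [abs_of_neg hneg] at hac
          linarith
        obtain ⟨s, hs, hes⟩ := key (-x) hx' a ha0 hc'
        refine ⟨s, hs, ?_⟩
        rwa [inner_neg_right, abs_neg] at hes
    obtain ⟨s, hsI, hse⟩ := step2
    have hs0 : 0 ≤ s := le_trans ha0 hsI.1
    have hts : t ≤ s := le_trans haI.1 hsI.1
    have hsρ : s + ρ ≤ t + T' := by
      have h1 : s ≤ a + δ := hsI.2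
      have h2 : a ≤ t + T := haI.2
      rw [hT'def]
      linarith
    have hlow : ∀ τ ∈ Icc s (s + ρ), ε / 2 ≤ |(inner ℝ (z τ) x : ℝ)| := by
      intro τ hτ
      have hτ0 : 0 ≤ τ := le_trans hs0 hτ.1
      have hlip := hφlip x hx s hs0 τ hτ0
      have h1 : |τ - s| ≤ ρ := by
        rw [abs_of_nonneg (by linarith [hτ.1])]
        linarith [hτ.2]
      have hLρ : L * ρ = ε / 2 := by
        rw [hρdef]; field_simp
      have h2 : |(inner ℝ (z τ) x : ℝ) - (inner ℝ (z s) x : ℝ)| ≤ ε / 2 := by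
        calc |(inner ℝ (z τ) x : ℝ) - (inner ℝ (z s) x : ℝ)| ≤ L * |τ - s| := hlip
          _ ≤ L * ρ := mul_le_mul_of_nonneg_left h1 hL.le
          _ = ε / 2 := hLρ
      have h3 : |(inner ℝ (z s) x : ℝ)| - |(inner ℝ (z τ) x : ℝ)|
          ≤ |(inner ℝ (z s) x : ℝ) - (inner ℝ (z τ) x : ℝ)| := abs_sub_abs_le_abs_sub _ _
      rw [abs_sub_comm] at h2
      linarith
    have hsum1 := intervalIntegral.integral_add_adjacent_intervals
      (hzint x t s ht hts) (hzint x s (s + ρ) hs0 (by linarith))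
    have hsum2 := intervalIntegral.integral_add_adjacent_intervals
      (hzint x t (s + ρ) ht (by linarith)) (hzint x (s + ρ) (t + T') (by linarith) hsρ)
    have hnn1 : 0 ≤ ∫ τ in t..s, (inner ℝ (z τ) x : ℝ) ^ 2 :=
      intervalIntegral.integral_nonneg hts (fun u _ => sq_nonneg _)
    have hnn2 : 0 ≤ ∫ τ in (s + ρ)..(t + T'), (inner ℝ (z τ) x : ℝ) ^ 2 :=
      intervalIntegral.integral_nonneg hsρ (fun u _ => sq_nonneg _)
    have hmid : (ε / 2) ^ 2 * ρ ≤ ∫ τ in s..(s + ρ), (inner ℝ (z τ) x : ℝ) ^ 2 := by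
      have hmono : ∫ τ in s..(s + ρ), ((ε / 2) ^ 2)
          ≤ ∫ τ in s..(s + ρ), (inner ℝ (z τ) x : ℝ) ^ 2 := by
        apply intervalIntegral.integral_mono_on (by linarith) intervalIntegrable_const
          (hzint x s (s + ρ) hs0 (by linarith))
        intro τ hτ
        have hl := hlow τ hτ
        calc (ε / 2) ^ 2 ≤ |(inner ℝ (z τ) x : ℝ)| ^ 2 := pow_le_pow_left₀ (by linarith) hl 2
          _ = (inner ℝ (z τ) x : ℝ) ^ 2 := sq_abs _
      rw [intervalIntegral.integral_const] at hmono
      have hval : (s + ρ - s) • ((ε / 2) ^ 2) = (ε / 2) ^ 2 * ρ := by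
        rw [smul_eq_mul]; ring
      rw [hval] at hmono
      exact hmono
    rw [hκ'def]
    linarith [hsum1, hsum2, hnn1, hnn2, hmid]
  -- assembly
  refine ⟨T', κ', hT', hκ', ?_⟩
  intro x t ht
  rcases eq_or_ne x 0 with rfl | hx0
  · simp
  · have hxn : 0 < ‖x‖ := norm_pos_iff.mpr hx0
    have hu1 : ‖(‖x‖⁻¹ • x)‖ = 1 := by
      rw [norm_smul, norm_inv, norm_norm, inv_mul_cancel₀ hxn.ne']
    have hmain := main (‖x‖⁻¹ • x) hu1 t ht
    have hrw : ∀ τ : ℝ, (inner ℝ (z τ) (‖x‖⁻¹ • x) : ℝ) ^ 2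
        = (‖x‖⁻¹) ^ 2 * (inner ℝ (z τ) x : ℝ) ^ 2 := by
      intro τ
      rw [real_inner_smul_right]
      ring
    have hcongr : ∫ τ in t..(t + T'), (inner ℝ (z τ) (‖x‖⁻¹ • x) : ℝ) ^ 2
        = (‖x‖⁻¹) ^ 2 * ∫ τ in t..(t + T'), (inner ℝ (z τ) x : ℝ) ^ 2 := by
      rw [intervalIntegral.integral_congr (g := fun τ => (‖x‖⁻¹) ^ 2 * (inner ℝ (z τ) x : ℝ) ^ 2)
        (fun τ _ => hrw τ)]
      exact intervalIntegral.integral_const_mul _ _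
    rw [hcongr] at hmain
    have hfin := mul_le_mul_of_nonneg_right hmain (sq_nonneg ‖x‖)
    calc κ' * ‖x‖ ^ 2
        ≤ ((‖x‖⁻¹) ^ 2 * ∫ τ in t..(t + T'), (inner ℝ (z τ) x : ℝ) ^ 2) * ‖x‖ ^ 2 := hfin
      _ = ∫ τ in t..(t + T'), (inner ℝ (z τ) x : ℝ) ^ 2 := by
          field_simp
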